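/- For exponential rates 0 < λ_A < λ_B and v_T > 0, builder A's expected profit in Scenario 2, namely (v_{T,A} - v_{T,B}) + ∫_0^∞ ∫_0^{v_A} F_B(v + v_T) dv dF_A(v_A), strictly exceeds their Scenario-1 profit λ_B/(λ_A(λ_A + λ_B)). Moreover the difference equals (λ_B - λ_A)[λ_A(1 - e^{-v_T λ_B}) + λ_B(1 - e^{-v_T λ_A})] / (λ_A λ_B (λ_A + λ_B)) + (1 - e^{-v_T λ_B})/(λ_A + λ_B), a sum of strictly positive terms. -/

import Mathlib

open Real MeasureTheory Set intervalIntegral Filter Topology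

lemma stmt13_integral (lA lB vT : ℝ) (hA : 0 < lA) (hAB : lA < lB) (hT : 0 < vT) :
    (∫ vA in Ioi (0:ℝ),
          (∫ v in (0:ℝ)..vA, (1 - exp (-(lB * (v + vT))))) * (lA * exp (-(lA * vA))))
      = 1/lA - exp (-(lB*vT))/(lA+lB) := by
  have hB : 0 < lB := hA.trans hAB
  have hS : 0 < lA + lB := by linarith
  set C : ℝ := exp (-(lB * vT)) / lB with hC
  -- inner integral
  have inner : ∀ a : ℝ, (∫ v in (0:ℝ)..a, (1 - exp (-(lB * (v + vT)))))
      = a + C * (exp (-(lB * a)) - 1) := by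
    intro a
    have hd : ∀ v ∈ uIcc (0:ℝ) a,
        HasDerivAt (fun v => v + exp (-(lB * (v + vT))) / lB)
          (1 - exp (-(lB * (v + vT)))) v := by
      intro v _
      have h1 : HasDerivAt (fun v : ℝ => -(lB * (v + vT))) (-lB) v := by
        have h := (((hasDerivAt_id v).add_const vT).const_mul lB).neg
        simp only [mul_one] at h; exact h
      have h2 := (h1.exp.div_const lB)
      have h3 := (hasDerivAt_id v).add h2
      refine h3.congr_deriv ?_
      rw [mul_neg, neg_div, mul_div_assoc, div_self hB.ne']
      ring
    have hint : IntervalIntegrable (fun v => 1 - exp (-(lB * (v + vT)))) volume 0 a := by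
      apply Continuous.intervalIntegrable; fun_prop
    rw [intervalIntegral.integral_eq_sub_of_hasDerivAt hd hint]
    have e1 : exp (-(lB * (a + vT))) = exp (-(lB * a)) * exp (-(lB * vT)) := by
      rw [← Real.exp_add]; ring_nf
    simp only [e1, hC]
    field_simp
    ring
  -- antiderivative
  set G : ℝ → ℝ := fun x => -((x + 1/lA) * exp (-(lA*x)))
      - (lA * C / (lA+lB)) * exp (-((lA+lB)*x)) + C * exp (-(lA*x)) with hG
  have hderiv : ∀ x ∈ Ici (0:ℝ), HasDerivAt G
      ((∫ v in (0:ℝ)..x, (1 - exp (-(lB * (v + vT))))) * (lA * exp (-(lA * x)))) x := by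
    intro x _
    have eA : HasDerivAt (fun x : ℝ => exp (-(lA*x))) (-lA * exp (-(lA*x))) x := by
      have h1 : HasDerivAt (fun x : ℝ => -(lA * x)) (-lA) x := by
        have h := ((hasDerivAt_id x).const_mul lA).neg
        simp only [mul_one] at h; exact h
      simpa [mul_comm] using h1.exp
    have eS : HasDerivAt (fun x : ℝ => exp (-((lA+lB)*x))) (-(lA+lB) * exp (-((lA+lB)*x))) x := by
      have h1 : HasDerivAt (fun x : ℝ => -((lA+lB) * x)) (-(lA+lB)) x := by
        have h := ((hasDerivAt_id x).const_mul (lA+lB)).neg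
        simp only [mul_one] at h; exact h
      simpa [mul_comm] using h1.exp
    have h1 : HasDerivAt (fun x : ℝ => (x + 1/lA) * exp (-(lA*x)))
        (1 * exp (-(lA*x)) + (x + 1/lA) * (-lA * exp (-(lA*x)))) x :=
      (((hasDerivAt_id x).add_const (1/lA))).mul eA
    have hG' : HasDerivAt G
        (-(1 * exp (-(lA*x)) + (x + 1/lA) * (-lA * exp (-(lA*x))))
          - (lA * C / (lA+lB)) * (-(lA+lB) * exp (-((lA+lB)*x)))
          + C * (-lA * exp (-(lA*x)))) x :=
      ((h1.neg.sub ((eS.const_mul _))).add (eA.const_mul C))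
    convert hG' using 1
    rw [inner x]
    have e2 : exp (-((lA+lB)*x)) = exp (-(lA*x)) * exp (-(lB*x)) := by
      rw [← Real.exp_add]; ring_nf
    rw [e2]
    field_simp
    ring
  have hpos : ∀ x ∈ Ioi (0:ℝ), 0 ≤
      (∫ v in (0:ℝ)..x, (1 - exp (-(lB * (v + vT))))) * (lA * exp (-(lA * x))) := by
    intro x hx
    apply mul_nonneg _ (by positivity)
    apply intervalIntegral.integral_nonneg (le_of_lt hx)
    intro u hu
    have : -(lB * (u + vT)) ≤ 0 := by nlinarith [hu.1]
    have := Real.exp_le_one_iff.2 this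
    linarith
  -- limit
  have hlim : Tendsto G atTop (𝓝 0) := by
    have hexp : ∀ c : ℝ, 0 < c → Tendsto (fun x : ℝ => exp (-(c*x))) atTop (𝓝 0) := by
      intro c hc
      have hmul : Tendsto (fun x : ℝ => c * x) atTop atTop :=
        Tendsto.const_mul_atTop hc tendsto_id
      exact (Real.tendsto_exp_neg_atTop_nhds_zero.comp hmul).congr fun x => by
        simp [Function.comp]
    have h1 : Tendsto (fun x : ℝ => x * exp (-(lA*x))) atTop (𝓝 0) := by
      have base := Real.tendsto_pow_mul_exp_neg_atTop_nhds_zero 1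
      have hmul : Tendsto (fun x : ℝ => lA * x) atTop atTop :=
        Tendsto.const_mul_atTop hA tendsto_id
      have comp := base.comp hmul
      have := comp.const_mul (1/lA)
      rw [mul_zero] at this
      refine this.congr fun x => ?_
      simp [Function.comp]
      field_simp
    have h2 := hexp lA hA
    have h3 := hexp (lA+lB) hS
    have := (((h1.add (h2.const_mul (1/lA))).neg.sub (h3.const_mul (lA*C/(lA+lB)))).add
      (h2.const_mul C))
    simp only [mul_zero, add_zero, neg_zero, sub_zero, zero_add] at this
    refine this.congr fun x => ?_
    simp only [hG]
    ring
  rw [MeasureTheory.integral_Ioi_of_hasDerivAt_of_nonneg' hderiv hpos hlim]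
  simp only [hG, hC, mul_zero, neg_zero, Real.exp_zero, mul_one]
  field_simp
  ring


/-- For exponential rates `0 < λ_A < λ_B` and `v_T > 0`, builder A's
expected Scenario-2 profit `(v_{T,A} - v_{T,B}) + ∫_0^∞ ∫_0^{v_A} F_B(v + v_T) dv dF_A(v_A)`
strictly exceeds the Scenario-1 profit `λ_B / (λ_A (λ_A + λ_B))`, and the difference
equals the stated sum of strictly positive terms. -/
theorem stmt_13 (lA lB vT : ℝ) (hA : 0 < lA) (hAB : lA < lB) (hT : 0 < vT)
    (vTA vTB profit2 : ℝ)
    (hvTA : vTA = (lA * (1 - exp (-(vT * lB))) + lB * (1 - exp (-(vT * lA))))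
        / (lA * (lA + lB)))
    (hvTB : vTB = (lB * (1 - exp (-(vT * lA))) + lA * (1 - exp (-(vT * lB))))
        / (lB * (lA + lB)))
    (hprofit : profit2 = (vTA - vTB) +
        ∫ vA in Ioi (0:ℝ),
          (∫ v in (0:ℝ)..vA, (1 - exp (-(lB * (v + vT))))) * (lA * exp (-(lA * vA)))) :
    profit2 > lB / (lA * (lA + lB)) ∧
      profit2 - lB / (lA * (lA + lB)) =
        (lB - lA) * (lA * (1 - exp (-(vT * lB))) + lB * (1 - exp (-(vT * lA))))
            / (lA * lB * (lA + lB))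
          + (1 - exp (-(vT * lB))) / (lA + lB) := by
  have hB : 0 < lB := hA.trans hAB
  have hS : 0 < lA + lB := by linarith
  have hcomm : exp (-(lB * vT)) = exp (-(vT * lB)) := by ring_nf
  have key : profit2 = vTA - vTB + (1/lA - exp (-(vT*lB))/(lA+lB)) := by
    rw [hprofit, stmt13_integral lA lB vT hA hAB hT, hcomm]
  have heB1 : exp (-(vT * lB)) < 1 := by
    rw [Real.exp_lt_one_iff]; nlinarith
  have heA1 : exp (-(vT * lA)) < 1 := by
    rw [Real.exp_lt_one_iff]; nlinarith
  have hdiff : profit2 - lB / (lA * (lA + lB)) =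
      (lB - lA) * (lA * (1 - exp (-(vT * lB))) + lB * (1 - exp (-(vT * lA))))
          / (lA * lB * (lA + lB))
        + (1 - exp (-(vT * lB))) / (lA + lB) := by
    rw [key, hvTA, hvTB]
    field_simp
    ring
  refine ⟨?_, hdiff⟩
  have hT1 : 0 < (lB - lA) * (lA * (1 - exp (-(vT * lB))) + lB * (1 - exp (-(vT * lA))))
      / (lA * lB * (lA + lB)) := by
    apply div_pos _ (by positivity)
    apply mul_pos (by linarith)
    have := (Real.exp_pos (-(vT * lA))).le
    nlinarith
  have hT2 : 0 < (1 - exp (-(vT * lB))) / (lA + lB) := by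
    apply div_pos (by linarith) hS
  linarith
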